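/- Let n ≥ 2, k = ⌊(n−1)/2⌋, and let z_{i,j} ∈ ℝ for 1 ≤ i < j ≤ n. Define t_i = Σ_{j=1}^{n−i} z_{j,i+j} − Σ_{j=1}^{i} z_{j,n−i+j} for i = 1,…,k. Then Σ_{i=1}^{k} t_i² ≤ n Σ_{1≤i<j≤n} z_{i,j}², with equality possible only when the Cauchy–Schwarz bounds are attained; in particular each t_i is a sum of n distinct terms ±z_{a,b} with all index pairs (a,b) distinct across different i. -/

import Mathlib

/-- Cauchy–Schwarz-type bound: `∑_{i=1}^{⌊(n−1)/2⌋} t_i² ≤ n ∑_{1≤i<j≤n} z_{i,j}²`. -/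
theorem sum_t_sq_le (n : ℕ) (hn : 2 ≤ n) (z : ℕ → ℕ → ℝ) (t : ℕ → ℝ)
    (ht : ∀ i, t i = (∑ j ∈ Finset.Icc 1 (n - i), z j (i + j)) -
        ∑ j ∈ Finset.Icc 1 i, z j (n - i + j)) :
    ∑ i ∈ Finset.Icc 1 ((n - 1) / 2), t i ^ 2 ≤
      (n : ℝ) * ∑ i ∈ Finset.Icc 1 n, ∑ j ∈ Finset.Icc (i + 1) n, z i j ^ 2 := by
  set k := (n - 1) / 2 with hk
  -- the signed summand
  set f : ℕ → ℕ → ℝ := fun i j => if j ≤ n - i then z j (i + j) else -z (j - (n - i)) j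
    with hf
  -- the pair map
  set e : ℕ × ℕ → ℕ × ℕ := fun p =>
    if p.2 ≤ n - p.1 then (p.2, p.1 + p.2) else (p.2 - (n - p.1), p.2) with he
  have hkn : ∀ i ∈ Finset.Icc 1 k, 1 ≤ i ∧ 2 * i ≤ n - 1 := by
    intro i hi
    simp only [Finset.mem_Icc, hk] at hi
    omega
  -- Step 1: rewrite t i as a single sum of n signed terms
  have step1 : ∀ i ∈ Finset.Icc 1 k, t i = ∑ j ∈ Finset.Icc 1 n, f i j := by
    intro i hi
    obtain ⟨hi1, hi2⟩ := hkn i hi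
    have hsplit : Finset.Icc 1 n = Finset.Icc 1 (n - i) ∪ Finset.Icc (n - i + 1) n := by
      ext x; simp only [Finset.mem_union, Finset.mem_Icc]; omega
    have hdisj : Disjoint (Finset.Icc 1 (n - i)) (Finset.Icc (n - i + 1) n) := by
      rw [Finset.disjoint_left]; intro x hx hx'
      simp only [Finset.mem_Icc] at hx hx'; omega
    rw [ht, hsplit, Finset.sum_union hdisj]
    have h1 : ∑ j ∈ Finset.Icc 1 (n - i), f i j
        = ∑ j ∈ Finset.Icc 1 (n - i), z j (i + j) := by
      apply Finset.sum_congr rfl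
      intro j hj
      simp only [Finset.mem_Icc] at hj
      simp [hf, hj.2]
    have h2 : ∑ j ∈ Finset.Icc (n - i + 1) n, f i j
        = - ∑ j ∈ Finset.Icc 1 i, z j (n - i + j) := by
      rw [← Finset.sum_neg_distrib]
      refine Finset.sum_nbij' (fun j => j - (n - i)) (fun j => j + (n - i)) ?_ ?_ ?_ ?_ ?_
      · intro j hj; simp only [Finset.mem_Icc] at hj ⊢; omega
      · intro j hj; simp only [Finset.mem_Icc] at hj ⊢; omega
      · intro j hj; simp only [Finset.mem_Icc] at hj; omega
      · intro j hj; simp only [Finset.mem_Icc] at hj; omega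
      · intro j hj
        simp only [Finset.mem_Icc] at hj
        have hjle : ¬ j ≤ n - i := by omega
        simp only [hf, hjle, if_false, neg_inj]
        have h3 : n - i + (j - (n - i)) = j := by omega
        rw [h3]
    rw [h1, h2]
    ring
  -- Step 2: Cauchy–Schwarz for each i
  have step2 : ∀ i ∈ Finset.Icc 1 k,
      t i ^ 2 ≤ (n : ℝ) * ∑ j ∈ Finset.Icc 1 n, (z (e (i, j)).1 (e (i, j)).2) ^ 2 := by
    intro i hi
    rw [step1 i hi]
    have := sq_sum_le_card_mul_sum_sq (s := Finset.Icc 1 n) (f := f i)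
    rw [Nat.card_Icc] at this
    simp only [Nat.add_sub_cancel] at this
    calc (∑ j ∈ Finset.Icc 1 n, f i j) ^ 2
        ≤ (n : ℝ) * ∑ j ∈ Finset.Icc 1 n, f i j ^ 2 := this
      _ = (n : ℝ) * ∑ j ∈ Finset.Icc 1 n, (z (e (i, j)).1 (e (i, j)).2) ^ 2 := by
          congr 1
          apply Finset.sum_congr rfl
          intro j hj
          by_cases h : j ≤ n - i
          · simp [hf, he, h]
          · simp [hf, he, h]
  -- Step 3: the index pairs are distinct
  have step3 : ∑ i ∈ Finset.Icc 1 k, ∑ j ∈ Finset.Icc 1 n,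
      (z (e (i, j)).1 (e (i, j)).2) ^ 2
      ≤ ∑ i ∈ Finset.Icc 1 n, ∑ j ∈ Finset.Icc (i + 1) n, z i j ^ 2 := by
    have hRHS : ∑ i ∈ Finset.Icc 1 n, ∑ j ∈ Finset.Icc (i + 1) n, z i j ^ 2
        = ∑ q ∈ ((Finset.Icc 1 n ×ˢ Finset.Icc 1 n).filter fun q => q.1 < q.2),
            z q.1 q.2 ^ 2 := by
      rw [Finset.sum_filter, Finset.sum_product]
      apply Finset.sum_congr rfl
      intro a _
      rw [← Finset.sum_filter]
      congr 1
      ext b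
      simp only [Finset.mem_filter, Finset.mem_Icc]
      omega
    rw [hRHS, ← Finset.sum_product']
    have hinj : Set.InjOn e ↑(Finset.Icc 1 k ×ˢ Finset.Icc 1 n) := by
      intro p hp q hq hpq
      simp only [Finset.mem_coe, Finset.mem_product, Finset.mem_Icc] at hp hq
      simp only [he] at hpq
      split_ifs at hpq with h1 h2 h2 <;>
        · simp only [Prod.mk.injEq] at hpq
          simp only [hk] at hp hq
          ext <;> omega
    have hre : ∑ x ∈ Finset.Icc 1 k ×ˢ Finset.Icc 1 n, z (e (x.1, x.2)).1 (e (x.1, x.2)).2 ^ 2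
        = ∑ q ∈ (Finset.Icc 1 k ×ˢ Finset.Icc 1 n).image e, z q.1 q.2 ^ 2 := by
      rw [Finset.sum_image (fun p hp q hq h => hinj hp hq h)]
    rw [hre]
    apply Finset.sum_le_sum_of_subset_of_nonneg
    · intro q hq
      simp only [Finset.mem_image, Finset.mem_product, Finset.mem_Icc] at hq
      obtain ⟨p, ⟨⟨hp1, hp2⟩, hp3, hp4⟩, rfl⟩ := hq
      simp only [Finset.mem_filter, Finset.mem_product, Finset.mem_Icc, he, hk] at hp2 ⊢
      split_ifs with h <;> dsimp only <;> omega
    · intro q _ _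
      positivity
  calc ∑ i ∈ Finset.Icc 1 k, t i ^ 2
      ≤ ∑ i ∈ Finset.Icc 1 k, (n : ℝ) * ∑ j ∈ Finset.Icc 1 n,
          (z (e (i, j)).1 (e (i, j)).2) ^ 2 := Finset.sum_le_sum step2
    _ = (n : ℝ) * ∑ i ∈ Finset.Icc 1 k, ∑ j ∈ Finset.Icc 1 n,
          (z (e (i, j)).1 (e (i, j)).2) ^ 2 := by rw [Finset.mul_sum]
    _ ≤ (n : ℝ) * ∑ i ∈ Finset.Icc 1 n, ∑ j ∈ Finset.Icc (i + 1) n, z i j ^ 2 := by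
        apply mul_le_mul_of_nonneg_left step3 (by positivity)
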